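/- Let W be an s-dimensional K-vector space and V = Λ²W* ⊕ W. Define the alternating trilinear form ω on V by ω(μ₁,μ₂,·)=0 for μ₁,μ₂ ∈ Λ²W*, ω(μ,w₁,w₂)=μ(w₁,w₂) for μ ∈ Λ²W*, w₁,w₂ ∈ W, and ω(w₁,w₂,w₃)=0 for w₁,w₂,w₃ ∈ W. Then a 2-dimensional subspace of V is singular for ω if and only if it is either contained in Λ²W*, or of the form Kμ₁ ⊕ K(μ₂+w₂) with μ₁,μ₂ ∈ Λ²W* and w₂ a vector in the radical of μ₁. -/

import Mathlib

set_option linter.unusedSectionVars false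
set_option synthInstance.maxHeartbeats 1000000
set_option maxHeartbeats 1000000

section helpers
variable {K W : Type*} [Field K] [AddCommGroup W] [Module K W]

lemma upd0 (x y z : W) : Function.update ![x, y] 0 z = ![z, y] := by
  funext i; fin_cases i <;> simp
lemma upd1 (x y z : W) : Function.update ![x, y] 1 z = ![x, z] := by
  funext i; fin_cases i <;> simp

variable (ν : AlternatingMap K W K (Fin 2))

lemma alt2_add_left (x x' y : W) : ν ![x + x', y] = ν ![x, y] + ν ![x', y] := by
  rw [← upd0 x y (x + x'), ν.map_update_add, upd0, upd0]
lemma alt2_add_right (x y y' : W) : ν ![x, y + y'] = ν ![x, y] + ν ![x, y'] := by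
  rw [← upd1 x y (y + y'), ν.map_update_add, upd1, upd1]
lemma alt2_smul_left (c : K) (x y : W) : ν ![c • x, y] = c * ν ![x, y] := by
  rw [← upd0 x y (c • x), ν.map_update_smul, upd0, smul_eq_mul]
lemma alt2_smul_right (c : K) (x y : W) : ν ![x, c • y] = c * ν ![x, y] := by
  rw [← upd1 x y (c • y), ν.map_update_smul, upd1, smul_eq_mul]
lemma alt2_zero_left (y : W) : ν ![0, y] = 0 :=
  ν.map_coord_zero (m := ![0, y]) 0 rfl
lemma alt2_zero_right (x : W) : ν ![x, 0] = 0 :=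
  ν.map_coord_zero (m := ![x, 0]) 1 rfl
lemma alt2_self (x : W) : ν ![x, x] = 0 :=
  ν.map_eq_zero_of_eq ![x, x] (i := 0) (j := 1) rfl (by decide)
lemma alt2_swap (x y : W) : ν ![y, x] = - ν ![x, y] := by
  have h := ν.map_eq_zero_of_eq ![x + y, x + y] (i := 0) (j := 1) rfl (by decide)
  rw [alt2_add_left, alt2_add_right, alt2_add_right, alt2_self, alt2_self] at h
  linear_combination h

/-- The alternating bilinear form `f ∧ g`. -/
def altOf (f g : W →ₗ[K] K) : AlternatingMap K W K (Fin 2) where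
  toFun v := f (v 0) * g (v 1) - f (v 1) * g (v 0)
  map_update_add' m i x y := by
    fin_cases i <;> simp [Function.update_apply] <;> ring
  map_update_smul' m i c x := by
    fin_cases i <;> simp [Function.update_apply] <;> ring
  map_eq_zero_of_eq' v i j h hij := by
    fin_cases i <;> fin_cases j <;> simp_all <;> ring

@[simp] lemma altOf_apply (f g : W →ₗ[K] K) (x y : W) :
    altOf f g ![x, y] = f x * g y - f y * g x := rfl

/-- Separation: if `a, b` are linearly independent there is an alternating
bilinear form not vanishing on them. -/
lemma exists_alt_ne_zero {a b : W} (h : LinearIndependent K ![a, b]) :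
    ∃ ν : AlternatingMap K W K (Fin 2), ν ![a, b] = 1 := by
  have hs : LinearIndepOn K id (Set.range ![a, b]) := (linearIndepOn_id_range_iff h.injective).mpr h
  let B := Module.Basis.extend hs
  have hab : a ≠ b := by
    intro hh
    exact (by decide : (0 : Fin 2) ≠ 1) (h.injective (by simp [hh]))
  have hamem : a ∈ hs.extend (Set.subset_univ _) := hs.subset_extend _ ⟨0, rfl⟩
  have hbmem : b ∈ hs.extend (Set.subset_univ _) := hs.subset_extend _ ⟨1, rfl⟩
  let ia : hs.extend (Set.subset_univ _) := ⟨a, hamem⟩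
  let ib : hs.extend (Set.subset_univ _) := ⟨b, hbmem⟩
  have hia : B ia = a := Module.Basis.extend_apply_self hs ia
  have hib : B ib = b := Module.Basis.extend_apply_self hs ib
  have hne : ia ≠ ib := fun hh => hab (congrArg Subtype.val hh)
  have e1 : (B.coord ia) a = 1 := by
    have : (B.coord ia) a = B.repr (B ia) ia := by rw [hia]; rfl
    rw [this, Module.Basis.repr_self]; simp
  have e2 : (B.coord ib) b = 1 := by
    have : (B.coord ib) b = B.repr (B ib) ib := by rw [hib]; rfl
    rw [this, Module.Basis.repr_self]; simp
  have e3 : (B.coord ia) b = 0 := by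
    have : (B.coord ia) b = B.repr (B ib) ia := by rw [hib]; rfl
    rw [this, Module.Basis.repr_self]; simp [Finsupp.single_apply, hne.symm]
  have e4 : (B.coord ib) a = 0 := by
    have : (B.coord ib) a = B.repr (B ia) ib := by rw [hia]; rfl
    rw [this, Module.Basis.repr_self]; simp [Finsupp.single_apply, hne]
  refine ⟨altOf (B.coord ia) (B.coord ib), ?_⟩
  rw [altOf_apply, e1, e2, e3, e4]; ring

end helpers

/-- The alternating trilinear form on `V = Λ²W* ⊕ W` determined by
`ω(μ₁,μ₂,·) = 0`, `ω(μ,w₁,w₂) = μ(w₁,w₂)` and `ω(w₁,w₂,w₃) = 0`, where `Λ²W*`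
is realised as the space of alternating bilinear forms on `W`. -/
def ωSplit {K W : Type*} [Field K] [AddCommGroup W] [Module K W]
    (x y z : AlternatingMap K W K (Fin 2) × W) : K :=
  x.1 ![y.2, z.2] + y.1 ![z.2, x.2] + z.1 ![x.2, y.2]

/-- A 2-dimensional subspace of `V = Λ²W* ⊕ W` is singular for
`ωSplit` iff it is contained in `Λ²W*`, or is of the form `Kμ₁ ⊕ K(μ₂ + w₂)`
with `μ₁, μ₂ ∈ Λ²W*` and `w₂` in the radical of `μ₁`. -/
theorem stmt16 {K W : Type*} [Field K] [AddCommGroup W] [Module K W]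
    [FiniteDimensional K W]
    (U : Submodule K (AlternatingMap K W K (Fin 2) × W))
    (hU : Module.finrank K U = 2) :
    (∀ u ∈ U, ∀ u' ∈ U, ∀ v, ωSplit u u' v = 0) ↔
      ((∀ x ∈ U, x.2 = 0) ∨
        ∃ (μ₁ μ₂ : AlternatingMap K W K (Fin 2)) (w₂ : W),
          (∀ w' : W, μ₁ ![w₂, w'] = 0) ∧
          U = Submodule.span K {(μ₁, 0), (μ₂, w₂)}) := by
  have hUfree : Module.Free K U := Module.Free.of_divisionRing K U
  have hUfin : Module.Finite K U := Module.finite_of_finrank_eq_succ hU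
  constructor
  · intro hsing
    by_cases hall : ∀ x ∈ U, x.2 = 0
    · exact Or.inl hall
    push_neg at hall
    obtain ⟨x₀, hx₀U, hx₀⟩ := hall
    -- all second components are multiples of x₀.2
    have key : ∀ u ∈ U, ∃ c : K, u.2 = c • x₀.2 := by
      intro u hu
      by_contra h
      push_neg at h
      have hli : LinearIndependent K ![u.2, x₀.2] := by
        rw [LinearIndependent.pair_iff]
        intro s t hst
        by_cases hs : s = 0
        · subst hs
          rw [zero_smul, zero_add] at hst
          refine ⟨rfl, ?_⟩
          by_contra ht
          exact hx₀ ((smul_eq_zero.1 hst).resolve_left ht)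
        · exfalso
          apply h (-(s⁻¹ * t))
          have h1 : s • u.2 = (-t) • x₀.2 := by
            rw [neg_smul, eq_neg_iff_add_eq_zero]; exact hst
          calc u.2 = s⁻¹ • (s • u.2) := by
                rw [smul_smul, inv_mul_cancel₀ hs, one_smul]
            _ = s⁻¹ • ((-t) • x₀.2) := by rw [h1]
            _ = (-(s⁻¹ * t)) • x₀.2 := by rw [smul_smul]; congr 1; ring
      obtain ⟨ν, hν⟩ := exists_alt_ne_zero hli
      have := hsing u hu x₀ hx₀U (ν, 0)
      simp only [ωSplit, alt2_zero_left, alt2_zero_right] at this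
      rw [hν] at this
      simpa using this
    -- a basis of U
    let B := Module.finBasisOfFinrankEq K U hU
    obtain ⟨c₁, hc₁⟩ := key (B 0 : U) (B 0).2
    obtain ⟨c₂, hc₂⟩ := key (B 1 : U) (B 1).2
    -- c₁, c₂ are not both zero
    have hc₁₂ : ¬(c₁ = 0 ∧ c₂ = 0) := by
      rintro ⟨rfl, rfl⟩
      have hrep := B.sum_repr ⟨x₀, hx₀U⟩
      rw [Fin.sum_univ_two] at hrep
      have : x₀.2 = 0 := by
        have := congrArg (fun z : U => (z : (AlternatingMap K W K (Fin 2) × W)).2) hrep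
        simpa [hc₁, hc₂] using this.symm
      exact hx₀ this
    -- the element of U with zero second component
    set zU : U := c₂ • B 0 - c₁ • B 1 with hzU
    have hz2 : (zU : (AlternatingMap K W K (Fin 2) × W)).2 = 0 := by
      simp only [hzU, Submodule.coe_sub, Submodule.coe_smul, Prod.snd_sub, Prod.smul_snd,
        hc₁, hc₂, smul_smul, mul_comm c₂ c₁]
      exact sub_self _
    have hzne : zU ≠ 0 := by
      intro h0
      apply hc₁₂
      have hli := B.linearIndependent
      letI : AddCommGroup U := U.addCommGroup
      rw [Fintype.linearIndependent_iff] at hli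
      have := hli ![c₂, -c₁] (by
        rw [Fin.sum_univ_two]
        simpa [hzU, sub_eq_add_neg, neg_smul] using h0)
      exact ⟨by simpa using this 1, by simpa using this 0⟩
    set μ₁ := (zU : (AlternatingMap K W K (Fin 2) × W)).1 with hμ₁
    have hzpair : (zU : (AlternatingMap K W K (Fin 2) × W)) = (μ₁, 0) := Prod.ext rfl hz2
    have hzU : (zU : (AlternatingMap K W K (Fin 2) × W)) ∈ U := zU.2
    -- the radical condition
    have hrad : ∀ w' : W, μ₁ ![x₀.2, w'] = 0 := by
      intro w'
      have := hsing (zU : (AlternatingMap K W K (Fin 2) × W)) hzU x₀ hx₀U (0, w')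
      simp only [ωSplit, hz2, alt2_zero_left, alt2_zero_right,
        AlternatingMap.zero_apply, add_zero, zero_add] at this
      exact this
    refine Or.inr ⟨μ₁, x₀.1, x₀.2, hrad, ?_⟩
    -- U is the span of the two vectors
    have hx₀pair : ((x₀.1, x₀.2) : (AlternatingMap K W K (Fin 2) × W)) = x₀ := rfl
    rw [hx₀pair]
    have hle : Submodule.span K {((μ₁, 0) : (AlternatingMap K W K (Fin 2) × W)), x₀} ≤ U := by
      rw [Submodule.span_le]
      rintro x (rfl | rfl)
      · exact hzpair ▸ hzU
      · exact hx₀U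
    have hliv : LinearIndependent K ![((μ₁, 0) : (AlternatingMap K W K (Fin 2) × W)), x₀] := by
      rw [LinearIndependent.pair_iff]
      intro s t hst
      have ht : t = 0 := by
        have := congrArg Prod.snd hst
        simp only [Prod.snd_add, Prod.smul_snd, smul_zero, zero_add] at this
        exact (smul_eq_zero.1 this).resolve_right hx₀
      subst ht
      refine ⟨?_, rfl⟩
      rw [zero_smul, add_zero] at hst
      have hμne : ((μ₁, 0) : (AlternatingMap K W K (Fin 2) × W)) ≠ 0 := by
        rw [← hzpair]
        simpa using hzne
      exact (smul_eq_zero.1 hst).resolve_right hμne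
    have hrange : Set.range ![((μ₁, 0) : (AlternatingMap K W K (Fin 2) × W)), x₀] = {((μ₁, 0) : (AlternatingMap K W K (Fin 2) × W)), x₀} := by
      ext x
      simp [Fin.exists_fin_two]; tauto
    have hft : Module.Finite K (Submodule.span K {((μ₁, 0) : (AlternatingMap K W K (Fin 2) × W)), x₀}) := by
      rw [← hrange]
      exact Module.Finite.span_of_finite _ (Set.finite_range _)
    have hfr : Module.finrank K (Submodule.span K {((μ₁, 0) : (AlternatingMap K W K (Fin 2) × W)), x₀}) = 2 := by
      rw [← hrange, finrank_span_eq_card hliv]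
      simp
    exact (Submodule.eq_of_le_of_finrank_le hle (by rw [hU, hfr])).symm
  · rintro (hall | ⟨μ₁, μ₂, w₂, hrad, rfl⟩)
    · intro u hu u' hu' v
      simp [ωSplit, hall u hu, hall u' hu', alt2_zero_left, alt2_zero_right, alt2_self]
    · intro u hu u' hu' v
      rw [Submodule.mem_span_pair] at hu hu'
      obtain ⟨a, b, rfl⟩ := hu
      obtain ⟨c, d, rfl⟩ := hu'
      simp only [ωSplit, Prod.fst_add, Prod.snd_add, Prod.smul_fst, Prod.smul_snd,
        smul_zero, zero_add, AlternatingMap.add_apply, AlternatingMap.smul_apply,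
        alt2_smul_left, alt2_smul_right, smul_eq_mul, hrad, alt2_self]
      have h1 := hrad v.2
      have h2 := alt2_swap μ₂ w₂ v.2
      have h3 := alt2_swap μ₁ w₂ v.2
      linear_combination (b * c) * h3 - (b * c) * h1 + (b * d) * h2
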